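/- The map f ↦ P_f from infinite sequences over {−1, 1} to infinite paperfolding sequences is injective; consequently there are uncountably many infinite paperfolding sequences. -/

import Mathlib

/-- `P` computes the finite paperfolding sequences: `P ε = ε` and, for a word
`f` of unfolding instructions over `{-1, 1}` and an instruction `a ∈ {-1, 1}`,
`P (f a) = (P f) · a · (-(P f))^R`, where `-x` negates every entry of `x` and
`x^R` is the reversal of `x`. -/
def IsPaperfold (P : List ℤ → List ℤ) : Prop :=
  P [] = [] ∧
    ∀ (f : List ℤ), (∀ x ∈ f, x = -1 ∨ x = 1) → ∀ a : ℤ, (a = -1 ∨ a = 1) →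
      P (f ++ [a]) = P f ++ a :: (((P f).map fun x => -x).reverse)

/-- The finite word `l` is a prefix of the infinite sequence
`p 1, p 2, p 3, …` (indexed from 1; `p 0` is irrelevant). -/
def PrefixOfSeq (l : List ℤ) (p : ℕ → ℤ) : Prop :=
  ∀ i : ℕ, ∀ h : i < l.length, l[i]'h = p (i + 1)

/-- `p 1, p 2, p 3, …` is the infinite paperfolding sequence associated with
the infinite sequence `F` of unfolding instructions: every finite paperfolding
word `P (F 0 ⋯ F n)` is a prefix of it. -/
def IsInfPaperfolding (P : List ℤ → List ℤ) (F : ℕ → ℤ) (p : ℕ → ℤ) : Prop :=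
  ∀ n : ℕ, PrefixOfSeq (P (List.ofFn fun i : Fin (n + 1) => F i)) p

section
variable (P : List ℤ → List ℤ) (hP : IsPaperfold P) (F : ℕ → ℤ) (hF : ∀ n, F n = -1 ∨ F n = 1)

include hP in
lemma len_P : ∀ f : List ℤ, (∀ x ∈ f, x = -1 ∨ x = 1) → (P f).length = 2 ^ f.length - 1 := by
  intro f
  induction f using List.reverseRecOn with
  | nil => intro _; simp [hP.1]
  | append_singleton f a ih =>
    intro hf
    have hf' : ∀ x ∈ f, x = -1 ∨ x = 1 := fun x hx => hf x (by simp [hx])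
    have ha : a = -1 ∨ a = 1 := hf a (by simp)
    rw [hP.2 f hf' a ha]
    have h1 : (1:ℕ) ≤ 2 ^ f.length := Nat.one_le_two_pow
    simp [ih hf', pow_succ]
    omega

noncomputable def fw (n : ℕ) : List ℤ := List.ofFn fun i : Fin n => F i

lemma fw_succ (n : ℕ) : fw F (n+1) = fw F n ++ [F n] := by
  rw [fw, List.ofFn_succ']
  simp [fw, List.concat_eq_append]

include hF in
lemma fw_mem (n : ℕ) : ∀ x ∈ fw F n, x = -1 ∨ x = 1 := by
  intro x hx
  simp only [fw, List.mem_ofFn] at hx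
  obtain ⟨i, rfl⟩ := hx
  exact hF i

include hP hF in
lemma len_fw (n : ℕ) : (P (fw F n)).length = 2 ^ n - 1 := by
  have := len_P P hP (fw F n) (fw_mem F hF n)
  simpa [fw] using this

include hP hF in
lemma P_prefix : ∀ n m : ℕ, n ≤ m → P (fw F n) <+: P (fw F m) := by
  intro n m h
  induction m with
  | zero => interval_cases n; exact List.prefix_refl _
  | succ m ih =>
    rcases Nat.lt_or_ge n (m+1) with h' | h'
    · have := ih (Nat.lt_succ_iff.mp h')
      rw [fw_succ, hP.2 _ (fw_mem F hF m) _ (hF m)]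
      exact this.trans (List.prefix_append _ _)
    · have : n = m + 1 := le_antisymm h h'
      subst this; exact List.prefix_refl _

include hP hF in
lemma P_mid (n : ℕ) (h : 2^n - 1 < (P (fw F (n+1))).length) :
    (P (fw F (n+1)))[2^n - 1]'h = F n := by
  have hl := len_fw P hP F hF n
  have he : P (fw F (n+1)) = P (fw F n) ++ F n :: ((P (fw F n)).map fun x => -x).reverse := by
    rw [fw_succ]; exact hP.2 _ (fw_mem F hF n) _ (hF n)
  rw [List.getElem_of_eq he, List.getElem_append_right (by omega)]
  simp [hl]
end

/-- the map `F ↦ P_F` from infinite sequences of unfolding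
instructions over `{-1, 1}` to infinite paperfolding sequences is injective;
consequently the set of infinite paperfolding sequences (normalized by the
irrelevant value `p 0 = 0`) is uncountable. -/
theorem paperfold_injective_and_uncountable
    (P : List ℤ → List ℤ) (hP : IsPaperfold P) :
    (∀ F F' p p' : ℕ → ℤ,
      (∀ n, F n = -1 ∨ F n = 1) → (∀ n, F' n = -1 ∨ F' n = 1) →
      IsInfPaperfolding P F p → IsInfPaperfolding P F' p' →
      (∀ n, 1 ≤ n → p n = p' n) → F = F') ∧
    ¬ Set.Countable {p : ℕ → ℤ | p 0 = 0 ∧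
        ∃ F : ℕ → ℤ, (∀ n, F n = -1 ∨ F n = 1) ∧ IsInfPaperfolding P F p} := by
  have key : ∀ (F p : ℕ → ℤ), (∀ n, F n = -1 ∨ F n = 1) → IsInfPaperfolding P F p →
      ∀ n, p (2 ^ n) = F n := by
    intro F p hF hInf n
    have h1 : (1:ℕ) ≤ 2 ^ n := Nat.one_le_two_pow
    have h2 : (2:ℕ) ^ n < 2 ^ (n+1) := by
      have := Nat.one_le_two_pow (n := n)
      calc 2^n < 2^n + 2^n := by omega
        _ = 2^(n+1) := by ring
    have hlen := len_fw P hP F hF (n+1)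
    have hi : 2 ^ n - 1 < (P (fw F (n+1))).length := by omega
    have := hInf n (2^n - 1) (by simpa [fw] using hi)
    have hmid := P_mid P hP F hF n hi
    simp only [fw] at hmid
    rw [hmid] at this
    rw [show (2:ℕ)^n = 2^n - 1 + 1 by omega]
    exact this.symm
  have inj : ∀ F F' p p' : ℕ → ℤ,
      (∀ n, F n = -1 ∨ F n = 1) → (∀ n, F' n = -1 ∨ F' n = 1) →
      IsInfPaperfolding P F p → IsInfPaperfolding P F' p' →
      (∀ n, 1 ≤ n → p n = p' n) → F = F' := by
    intro F F' p p' hF hF' hp hp' heq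
    funext n
    rw [← key F p hF hp n, ← key F' p' hF' hp' n]
    exact heq _ Nat.one_le_two_pow
  refine ⟨inj, ?_⟩
  intro hc
  set S := {p : ℕ → ℤ | p 0 = 0 ∧
      ∃ F : ℕ → ℤ, (∀ n, F n = -1 ∨ F n = 1) ∧ IsInfPaperfolding P F p} with hS
  let Fb : (ℕ → Bool) → ℕ → ℤ := fun b n => if b n then 1 else -1
  have hFb : ∀ b, ∀ n, Fb b n = -1 ∨ Fb b n = 1 := by
    intro b n; by_cases h : b n <;> simp [Fb, h]
  let g : (ℕ → Bool) → (ℕ → ℤ) := fun b m => (P (fw (Fb b) m)).getD (m-1) 0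
  have hidx : ∀ (b : ℕ → Bool) (i : ℕ), i < (P (fw (Fb b) (i+1))).length := by
    intro b i
    rw [len_fw P hP _ (hFb b)]
    have := Nat.lt_two_pow_self (n := i+1)
    omega
  have hgval : ∀ (b : ℕ → Bool) (i : ℕ), g b (i+1) = (P (fw (Fb b) (i+1)))[i]'(hidx b i) := by
    intro b i
    simp only [g, Nat.add_sub_cancel]
    rw [List.getD_eq_getElem _ _ (hidx b i)]
  have hinf : ∀ b, IsInfPaperfolding P (Fb b) (g b) := by
    intro b n i hi
    have hi2 : i < (P (fw (Fb b) (n+1))).length := hi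
    show (P (fw (Fb b) (n+1)))[i]'hi2 = g b (i+1)
    rw [hgval b i]
    rcases le_total (i+1) (n+1) with h | h
    · exact ((P_prefix P hP _ (hFb b) _ _ h).getElem (hidx b i)).symm
    · exact (P_prefix P hP _ (hFb b) _ _ h).getElem hi2
  have hmem : ∀ b, g b ∈ S := by
    intro b
    refine ⟨?_, Fb b, hFb b, hinf b⟩
    show (P (fw (Fb b) 0)).getD 0 0 = 0
    simp [fw, hP.1]
  have ginj : Function.Injective g := by
    intro b b' hbb
    have hFeq : Fb b = Fb b' :=
      inj _ _ (g b) (g b') (hFb b) (hFb b') (hinf b) (hinf b') (fun n _ => by rw [hbb])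
    funext n
    have := congrFun hFeq n
    by_cases h : b n <;> by_cases h' : b' n <;> simp [Fb, h, h'] at this ⊢ <;> omega
  have hpre : g ⁻¹' S = Set.univ := Set.eq_univ_of_forall fun b => hmem b
  have hcu : (Set.univ : Set (ℕ → Bool)).Countable := hpre ▸ hc.preimage ginj
  have hcount : Countable (ℕ → Bool) := Set.countable_univ_iff.mp hcu
  obtain ⟨e, he⟩ := hcount.exists_injective_nat
  classical
  have hh : Function.Injective (fun s : Set ℕ => fun n => decide (n ∈ s)) := by
    intro s t hst
    ext n
    have := congrFun hst n
    simpa using this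
  exact Function.cantor_injective (fun s => e (fun n => decide (n ∈ s))) (he.comp hh)
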